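/- Let E be an effect on H with λI ≤ E ≤ μI for 0 < λ < μ ≤ 1, and let P be a rank-one projection such that the strength of E along P equals λ. Then the range of P is contained in the eigenspace ker(E − λI) of E corresponding to the eigenvalue λ. -/

import Mathlib

open scoped InnerProductSpace

/-- An effect: a positive operator majorized by the identity (Loewner order). -/
def IsEffect {H : Type} [NormedAddCommGroup H] [InnerProductSpace ℂ H] [CompleteSpace H]
    (E : H →L[ℂ] H) : Prop := 0 ≤ E ∧ E ≤ 1

/-- A rank-one (orthogonal) projection. -/
def IsRankOneProjection {H : Type} [NormedAddCommGroup H] [InnerProductSpace ℂ H]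
    [CompleteSpace H] (P : H →L[ℂ] H) : Prop :=
  IsIdempotentElem P ∧ IsSelfAdjoint P ∧ Module.finrank ℂ (LinearMap.range P.toLinearMap) = 1

/-- The strength of an effect `E` along a rank-one projection `Q`:
`sup {t ∈ [0,1] : tQ ≤ E}`. -/
noncomputable def strength {H : Type} [NormedAddCommGroup H] [InnerProductSpace ℂ H]
    [CompleteSpace H] (E Q : H →L[ℂ] H) : ℝ :=
  sSup {t : ℝ | t ∈ Set.Icc (0:ℝ) 1 ∧ (t : ℂ) • Q ≤ E}

lemma re_c' (z : ℂ) : RCLike.re z = z.re := rfl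

lemma hself' {H : Type} [NormedAddCommGroup H] [InnerProductSpace ℂ H] [CompleteSpace H]
    (y : H) : (⟪y, y⟫_ℂ).re = ‖y‖^2 := by
  rw [← re_c', inner_self_eq_norm_sq]

lemma sa_inner_re' {H : Type} [NormedAddCommGroup H] [InnerProductSpace ℂ H] [CompleteSpace H]
    (F : H →L[ℂ] H) (hF : IsSelfAdjoint F) (v w : H) :
    (⟪F w, v⟫_ℂ).re = (⟪F v, w⟫_ℂ).re := by
  rw [← hF.adjoint_eq, ContinuousLinearMap.adjoint_inner_left, hF.adjoint_eq,
    ← re_c', ← re_c', inner_re_symm]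

lemma pos_cs' {H : Type} [NormedAddCommGroup H] [InnerProductSpace ℂ H] [CompleteSpace H]
    (F : H →L[ℂ] H) (hF : F.IsPositive) (v w : H) :
    ((⟪F v, w⟫_ℂ).re)^2 ≤ (⟪F v, v⟫_ℂ).re * (⟪F w, w⟫_ℂ).re := by
  have key : ∀ t : ℝ, 0 ≤ (⟪F w, w⟫_ℂ).re * (t*t) + (2*(⟪F v, w⟫_ℂ).re) * t
      + (⟪F v, v⟫_ℂ).re := by
    intro t
    have h := hF.2 (v + (t:ℂ) • w)
    rw [ContinuousLinearMap.reApplyInnerSelf_apply, re_c'] at h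
    have expand : (⟪F (v + (t:ℂ) • w), v + (t:ℂ) • w⟫_ℂ).re
        = (⟪F v, v⟫_ℂ).re + t * (⟪F v, w⟫_ℂ).re + t * (⟪F w, v⟫_ℂ).re
          + (t*t) * (⟪F w, w⟫_ℂ).re := by
      rw [map_add, map_smul]
      simp only [inner_add_left, inner_add_right, inner_smul_left, inner_smul_right,
        Complex.add_re, Complex.mul_re, Complex.conj_re, Complex.conj_im,
        Complex.ofReal_re, Complex.ofReal_im]
      ring
    rw [expand, sa_inner_re' F hF.isSelfAdjoint v w] at h
    linarith
  have hd := discrim_le_zero key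
  rw [discrim] at hd
  nlinarith [hd]

lemma key_ineq' (K lam c p q B R s : ℝ) (hK : 0<K) (hlam : 0<lam) (hc : 0<c)
    (hp : 0 ≤ p) (hB : 0 ≤ B) (hBK : B ≤ K*q^2) (hR : R^2 ≤ (c*p)*B)
    (hs : s*(K+lam) = lam*c) :
    s*p ≤ c*p + 2*R + B + lam*q^2 := by
  have hKl : (0:ℝ) < K + lam := by linarith
  set A := Real.sqrt (c*p) with hAdef
  set Bs := Real.sqrt B with hBdef
  have hA0 : 0 ≤ A := Real.sqrt_nonneg _
  have hBs0 : 0 ≤ Bs := Real.sqrt_nonneg _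
  have hA2 : A^2 = c*p := Real.sq_sqrt (by positivity)
  have hB2 : Bs^2 = B := Real.sq_sqrt hB
  have hBsq : Bs^2 ≤ K*q^2 := by rw [hB2]; exact hBK
  have step1 : -(A*Bs) ≤ R := by nlinarith [mul_nonneg hA0 hBs0]
  have t1 := sq_nonneg (K*A - (K+lam)*Bs)
  have t2 : lam*(K+lam)*Bs^2 ≤ lam*(K+lam)*(K*q^2) :=
    mul_le_mul_of_nonneg_left hBsq (by positivity)
  have t3 : K*(K+lam)*(s*p) = K*lam*A^2 := by
    calc K*(K+lam)*(s*p) = (s*(K+lam))*(K*p) := by ring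
    _ = (lam*c)*(K*p) := by rw [hs]
    _ = K*lam*A^2 := by rw [hA2]; ring
  have step2 : s*p ≤ (A-Bs)^2 + lam*q^2 := by
    nlinarith [t1, t2, t3, mul_pos hK hKl]
  nlinarith [step1, step2]

theorem range_subset_eigenspace_of_strength_eq
    {H : Type} [NormedAddCommGroup H] [InnerProductSpace ℂ H] [CompleteSpace H]
    (E : H →L[ℂ] H) (hE : IsEffect E)
    (lam mu : ℝ) (hlam : 0 < lam) (hlm : lam < mu) (hmu : mu ≤ 1)
    (hlow : (lam : ℂ) • (1 : H →L[ℂ] H) ≤ E) (hupp : E ≤ (mu : ℂ) • (1 : H →L[ℂ] H))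
    (P : H →L[ℂ] H) (hP : IsRankOneProjection P)
    (hstr : strength E P = lam) :
    ∀ x : H, E (P x) = (lam : ℂ) • P x := by
  intro x0
  by_contra hne
  obtain ⟨hidem, hsaP, hrank⟩ := hP
  have hEsa : IsSelfAdjoint E := ((ContinuousLinearMap.nonneg_iff_isPositive E).mp hE.1).isSelfAdjoint
  obtain ⟨F, hFdef⟩ : ∃ F : H →L[ℂ] H, F = E - (lam:ℂ) • 1 := ⟨_, rfl⟩
  have hFpos : F.IsPositive := by
    rw [hFdef]; exact (ContinuousLinearMap.le_def _ _).mp hlow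
  obtain ⟨K, hKdef⟩ : ∃ K : ℝ, K = mu - lam := ⟨_, rfl⟩
  have hK : 0 < K := by rw [hKdef]; linarith
  have hFupp : ((K:ℂ) • (1:H →L[ℂ] H) - F).IsPositive := by
    have h := (ContinuousLinearMap.le_def _ _).mp hupp
    have heq : (K:ℂ) • (1:H →L[ℂ] H) - F = (mu:ℂ) • 1 - E := by
      rw [hFdef, hKdef]; push_cast; module
    rw [heq]; exact h
  -- a unit vector spanning the range of P
  have hexu : ∃ u : H, ‖u‖ = 1 ∧ u ∈ LinearMap.range P.toLinearMap ∧
      ∀ z : H, z ∈ LinearMap.range P.toLinearMap → ∃ d : ℂ, z = d • u := by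
    obtain ⟨v0, hv0ne, hv0span⟩ := finrank_eq_one_iff'.mp hrank
    have hv0H : (v0 : H) ≠ 0 := fun h => hv0ne (Subtype.ext h)
    have hnv0 : ‖(v0:H)‖ ≠ 0 := norm_ne_zero_iff.mpr hv0H
    refine ⟨((‖(v0:H)‖:ℝ):ℂ)⁻¹ • (v0:H), ?_, Submodule.smul_mem _ _ v0.2, ?_⟩
    · rw [norm_smul, norm_inv, Complex.norm_real, norm_norm, inv_mul_cancel₀ hnv0]
    · intro z hz
      obtain ⟨d, hd⟩ := hv0span ⟨z, hz⟩
      have hdH : d • (v0:H) = z := congrArg Subtype.val hd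
      refine ⟨d * (‖(v0:H)‖:ℂ), ?_⟩
      rw [← hdH, smul_smul, mul_assoc, mul_inv_cancel₀ (by exact_mod_cast hnv0), mul_one]
  obtain ⟨u, hun, hu_mem, huspan⟩ := hexu
  have hune : u ≠ 0 := by intro h; rw [h] at hun; simp at hun
  have hPu : P u = u := by
    obtain ⟨y, hy⟩ := hu_mem
    simp only [ContinuousLinearMap.coe_coe] at hy
    rw [← hy, ← ContinuousLinearMap.mul_apply, hidem.eq]
  have huu : ⟪u, u⟫_ℂ = 1 := by
    rw [inner_self_eq_norm_sq_to_K, hun]; norm_num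
  have hrep : ∀ z : H, P z = ⟪u, z⟫_ℂ • u := by
    intro z
    obtain ⟨d, hd⟩ := huspan (P z) ⟨z, rfl⟩
    have h1 : ⟪u, P z⟫_ℂ = d := by rw [hd, inner_smul_right, huu, mul_one]
    have h2 : ⟪u, P z⟫_ℂ = ⟪u, z⟫_ℂ := by
      rw [← ContinuousLinearMap.adjoint_inner_left, hsaP.adjoint_eq, hPu]
    rw [hd, ← h1, h2]
  -- F u ≠ 0
  have hFu : F u ≠ 0 := by
    intro h0
    apply hne
    have h1 : F (P x0) = 0 := by rw [hrep x0, map_smul, h0, smul_zero]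
    rw [hFdef] at h1
    simp only [ContinuousLinearMap.sub_apply, ContinuousLinearMap.smul_apply,
      ContinuousLinearMap.one_apply] at h1
    exact sub_eq_zero.mp h1
  obtain ⟨c, hcdef⟩ : ∃ c : ℝ, c = (⟪F u, u⟫_ℂ).re := ⟨_, rfl⟩
  have hc0 : 0 ≤ c := by
    have := hFpos.2 u
    rw [ContinuousLinearMap.reApplyInnerSelf_apply, re_c'] at this
    rw [hcdef]; exact this
  have hcK : c ≤ K := by
    have h := hFupp.2 u
    rw [ContinuousLinearMap.reApplyInnerSelf_apply, re_c'] at h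
    have heq : (⟪((K:ℂ) • (1:H →L[ℂ] H) - F) u, u⟫_ℂ).re = K - c := by
      simp only [ContinuousLinearMap.sub_apply, ContinuousLinearMap.smul_apply,
        ContinuousLinearMap.one_apply, inner_sub_left, inner_smul_left, Complex.sub_re,
        Complex.conj_ofReal, Complex.re_ofReal_mul, hself']
      rw [hun, hcdef]; norm_num
    rw [heq] at h; linarith
  have hc : 0 < c := by
    rcases hc0.lt_or_eq with h | h
    · exact h
    · exfalso
      have hcs := pos_cs' F hFpos u (F u)
      rw [← hcdef, ← h, zero_mul, hself' (F u)] at hcs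
      have h6 : 0 < ‖F u‖ := norm_pos_iff.mpr hFu
      have h7 : 0 < (‖F u‖^2)^2 := by positivity
      linarith
  -- the improved bound
  have hKl : (0:ℝ) < K + lam := by linarith
  obtain ⟨s, hsdef⟩ : ∃ s : ℝ, s = lam * c / (K + lam) := ⟨_, rfl⟩
  have hs : 0 < s := by rw [hsdef]; positivity
  have hseq : s * (K + lam) = lam * c := by rw [hsdef]; field_simp
  have hsK : s ≤ K := by nlinarith [hseq, hcK, mul_pos hlam hc]
  obtain ⟨t', ht'def⟩ : ∃ t' : ℝ, t' = lam + s := ⟨_, rfl⟩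
  have ht1 : t' ≤ 1 := by rw [ht'def]; rw [hKdef] at hsK; linarith
  have ht0 : 0 ≤ t' := by rw [ht'def]; linarith
  -- t' belongs to the strength set
  have hmem : t' ∈ {t : ℝ | t ∈ Set.Icc (0:ℝ) 1 ∧ (t : ℂ) • P ≤ E} := by
    refine ⟨⟨ht0, ht1⟩, ?_⟩
    rw [ContinuousLinearMap.le_def]
    refine ⟨ContinuousLinearMap.isSelfAdjoint_iff_isSymmetric.mp (hEsa.sub (IsSelfAdjoint.smul (by exact Complex.conj_ofReal t') hsaP)), ?_⟩
    intro x
    rw [ContinuousLinearMap.reApplyInnerSelf_apply, re_c']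
    obtain ⟨α, hPx⟩ : ∃ α : ℂ, P x = α • u := huspan (P x) ⟨x, rfl⟩
    obtain ⟨w, hwdef⟩ : ∃ w : H, w = x - P x := ⟨_, rfl⟩
    have hx : x = P x + w := by rw [hwdef]; abel
    have hPw : P w = 0 := by
      rw [hwdef, map_sub, ← ContinuousLinearMap.mul_apply, hidem.eq, sub_self]
    have huw : ⟪u, w⟫_ℂ = 0 := by
      have h1 : ⟪u, w⟫_ℂ • u = 0 := by rw [← hrep w, hPw]
      rcases smul_eq_zero.mp h1 with h | h
      · exact h
      · exact absurd h hune
    have horth : (⟪P x, w⟫_ℂ).re = 0 := by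
      rw [hPx, inner_smul_left, huw, mul_zero, Complex.zero_re]
    -- numerical identities
    have e4 : (⟪F (P x), P x⟫_ℂ).re = c * ‖P x‖^2 := by
      rw [hPx, map_smul, inner_smul_left, inner_smul_right, ← mul_assoc,
        Complex.conj_mul', norm_smul, hun, mul_one,
        show ((‖α‖:ℂ))^2 = ((‖α‖^2 : ℝ):ℂ) from by push_cast; ring,
        Complex.re_ofReal_mul, hcdef]
      ring
    have hB0 : 0 ≤ (⟪F w, w⟫_ℂ).re := by
      have := hFpos.2 w
      rwa [ContinuousLinearMap.reApplyInnerSelf_apply, re_c'] at this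
    have hBK : (⟪F w, w⟫_ℂ).re ≤ K * ‖w‖^2 := by
      have h := hFupp.2 w
      rw [ContinuousLinearMap.reApplyInnerSelf_apply, re_c'] at h
      have heq : (⟪((K:ℂ) • (1:H →L[ℂ] H) - F) w, w⟫_ℂ).re
          = K * ‖w‖^2 - (⟪F w, w⟫_ℂ).re := by
        simp only [ContinuousLinearMap.sub_apply, ContinuousLinearMap.smul_apply,
          ContinuousLinearMap.one_apply, inner_sub_left, inner_smul_left, Complex.sub_re,
          Complex.conj_ofReal, Complex.re_ofReal_mul, hself']
      rw [heq] at h; linarith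
    have hR2 : ((⟪F (P x), w⟫_ℂ).re)^2 ≤ (c * ‖P x‖^2) * (⟪F w, w⟫_ℂ).re := by
      have := pos_cs' F hFpos (P x) w
      rwa [e4] at this
    have hkey := key_ineq' K lam c (‖P x‖^2) (‖w‖) ((⟪F w, w⟫_ℂ).re)
      ((⟪F (P x), w⟫_ℂ).re) s hK hlam hc (by positivity) hB0 hBK hR2 hseq
    -- expand the goal
    have e1 : (⟪(E - (t':ℂ) • P) x, x⟫_ℂ).re
        = (⟪E x, x⟫_ℂ).re - t' * (⟪P x, x⟫_ℂ).re := by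
      simp only [ContinuousLinearMap.sub_apply, ContinuousLinearMap.smul_apply,
        inner_sub_left, inner_smul_left, Complex.sub_re, Complex.conj_ofReal,
        Complex.re_ofReal_mul]
    have e2 : (⟪E x, x⟫_ℂ).re = (⟪F x, x⟫_ℂ).re + lam * ‖x‖^2 := by
      have hFx : F x = E x - (lam:ℂ) • x := by
        rw [hFdef]
        simp only [ContinuousLinearMap.sub_apply, ContinuousLinearMap.smul_apply,
          ContinuousLinearMap.one_apply]
      rw [hFx, inner_sub_left, Complex.sub_re, inner_smul_left, Complex.conj_ofReal,
        Complex.re_ofReal_mul, hself']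
      ring
    have e3 : (⟪F x, x⟫_ℂ).re = (⟪F (P x), P x⟫_ℂ).re + 2*(⟪F (P x), w⟫_ℂ).re
        + (⟪F w, w⟫_ℂ).re := by
      calc (⟪F x, x⟫_ℂ).re = (⟪F (P x + w), P x + w⟫_ℂ).re := by rw [← hx]
      _ = _ := by
        rw [map_add, inner_add_left, inner_add_right, inner_add_right, Complex.add_re,
          Complex.add_re, Complex.add_re, sa_inner_re' F hFpos.isSelfAdjoint (P x) w]
        ring
    have e5 : ‖x‖^2 = ‖P x‖^2 + ‖w‖^2 := by
      calc ‖x‖^2 = ‖P x + w‖^2 := by rw [← hx]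
      _ = _ := by rw [@norm_add_sq ℂ, re_c', horth]; ring
    have e6 : (⟪P x, x⟫_ℂ).re = ‖P x‖^2 := by
      calc (⟪P x, x⟫_ℂ).re = (⟪P x, P x + w⟫_ℂ).re := by rw [← hx]
      _ = _ := by rw [inner_add_right, Complex.add_re, horth, hself']; ring
    rw [e1, e2, e3, e6, e5, e4, ht'def]
    linarith [hkey]
  -- contradiction with strength = lam
  have hbdd : BddAbove {t : ℝ | t ∈ Set.Icc (0:ℝ) 1 ∧ (t : ℂ) • P ≤ E} :=
    ⟨1, fun t ht => ht.1.2⟩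
  have hle := le_csSup hbdd hmem
  rw [show sSup {t : ℝ | t ∈ Set.Icc (0:ℝ) 1 ∧ (t : ℂ) • P ≤ E} = strength E P from rfl,
    hstr, ht'def] at hle
  linarith
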